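/- For M > 0, Λ > 0 with 9M²Λ < 1, and with μ(r) = 2M/r + Λr²/3, ξ(r) = (1 - 3M/r)√(1 + 6M/r)/√(1 - 9M²Λ), f(r) = r√(1 - μ(r)), the identity 2·(-ξ(r))·f'(r) - 2f(r)·(d/dr(-ξ(r)) + (2/r)(-ξ(r))) = 2√(1 - 9M²Λ)/(√(1 - μ(r))·√(1 + 6M/r)) holds for all r in the open interval between the two positive roots of 1 - μ. -/

import Mathlib

noncomputable def μ (M Λ r : ℝ) : ℝ := 2*M/r + Λ*r^2/3

noncomputable def ξ (M Λ r : ℝ) : ℝ :=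
  (1 - 3*M/r) * Real.sqrt (1 + 6*M/r) / Real.sqrt (1 - 9*M^2*Λ)

lemma alg_key (M Λ r A B C : ℝ) (hr : r ≠ 0) (hA : A ≠ 0) (hB : B ≠ 0) (hC : C ≠ 0)
    (hA2 : A^2 = 1 - (2*M/r + Λ*r^2/3)) (hB2 : B^2 = 1 + 6*M/r)
    (hC2 : C^2 = 1 - 9*M^2*Λ) :
    2 * (-((1 - 3*M/r) * B / C)) * (A + r * ((2*M/r^2 - 2*Λ*r/3) / (2*A)))
      - 2 * (r*A) * (-((3*M/r^2) * B + (1 - 3*M/r) * ((-(6*M)/r^2)/(2*B))) / C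
          + (2/r) * (-((1 - 3*M/r) * B / C)))
    = 2 * C / (A*B) := by
  have ha : r*A^2 = r - 2*M - Λ*r^3/3 := by rw [hA2]; field_simp; ring
  have hb : r*B^2 = r + 6*M := by rw [hB2]; field_simp
  field_simp
  rw [hA2, hB2, hC2]
  field_simp
  ring

theorem key_commutation_coefficient_identity (M Λ rp rb : ℝ)
    (hM : 0 < M) (hΛ : 0 < Λ) (hsub : 9*M^2*Λ < 1)
    (hrp : 0 < rp) (hrprb : rp < rb)
    (hroot1 : 1 - μ M Λ rp = 0) (hroot2 : 1 - μ M Λ rb = 0) :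
    ∀ r ∈ Set.Ioo rp rb,
      2 * (-ξ M Λ r) * deriv (fun s => s * Real.sqrt (1 - μ M Λ s)) r
        - 2 * (r * Real.sqrt (1 - μ M Λ r)) *
            (deriv (fun s => -ξ M Λ s) r + (2/r) * (-ξ M Λ r))
      = 2 * Real.sqrt (1 - 9*M^2*Λ) /
          (Real.sqrt (1 - μ M Λ r) * Real.sqrt (1 + 6*M/r)) := by
  -- root equations without division
  rw [μ] at hroot1 hroot2
  have hrpne : rp ≠ 0 := hrp.ne'
  have hrbne : rb ≠ 0 := (hrp.trans hrprb).ne'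
  have e1 : 3*rp - 6*M - Λ*rp^3 = 0 := by
    have h := hroot1
    field_simp at h
    linarith
  have e2 : 3*rb - 6*M - Λ*rb^3 = 0 := by
    have h := hroot2
    field_simp at h
    linarith
  have h3 : 3 - Λ*(rp^2 + rp*rb + rb^2) = 0 := by
    have hfac : (rp - rb) * (3 - Λ*(rp^2 + rp*rb + rb^2)) = 0 := by
      linear_combination e1 - e2
    exact (mul_eq_zero.mp hfac).resolve_left (sub_ne_zero.mpr hrprb.ne)
  intro r hrIoo
  obtain ⟨hr1, hr2⟩ := hrIoo
  have hr0 : 0 < r := hrp.trans hr1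
  have hrne : r ≠ 0 := hr0.ne'
  -- positivity of 1 - μ on the interval
  have hfact : 3*r - 6*M - Λ*r^3 = Λ * ((r - rp) * ((rb - r) * (r + rp + rb))) := by
    linear_combination e1 + (r - rp) * h3
  have hApos : 0 < 1 - (2*M/r + Λ*r^2/3) := by
    have hp : 0 < 3*r - 6*M - Λ*r^3 := by
      rw [hfact]
      exact mul_pos hΛ (mul_pos (by linarith) (mul_pos (by linarith) (by linarith)))
    have key : 3*r*(1 - (2*M/r + Λ*r^2/3)) = 3*r - 6*M - Λ*r^3 := by
      field_simp; ring
    nlinarith [hp, key, hr0]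
  have hBpos : 0 < 1 + 6*M/r := by positivity
  have hCpos : 0 < 1 - 9*M^2*Λ := by linarith
  -- derivatives
  have hμd : HasDerivAt (fun s : ℝ => 2*M/s + Λ*s^2/3) (-(2*M)/r^2 + Λ*(2*r)/3) r := by
    have h1 : HasDerivAt (fun s : ℝ => 2*M/s) (-(2*M)/r^2) r := by
      have := (hasDerivAt_const r (2*M)).div (hasDerivAt_id r) hrne
      refine HasDerivAt.congr_deriv this ?_
      try simp only [id_eq]
      ring
    have h2 : HasDerivAt (fun s : ℝ => Λ*s^2/3) (Λ*(2*r)/3) r := by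
      have := ((hasDerivAt_pow 2 r).const_mul Λ).div_const 3
      refine HasDerivAt.congr_deriv this ?_
      try simp only [id_eq]
      ring
    exact h1.add h2
  have hin : HasDerivAt (fun s : ℝ => 1 - (2*M/s + Λ*s^2/3))
      (-(-(2*M)/r^2 + Λ*(2*r)/3)) r := by
    exact hμd.const_sub 1
  have hsq : HasDerivAt (fun s : ℝ => Real.sqrt (1 - (2*M/s + Λ*s^2/3)))
      ((-(-(2*M)/r^2 + Λ*(2*r)/3)) / (2 * Real.sqrt (1 - (2*M/r + Λ*r^2/3)))) r :=
    hin.sqrt hApos.ne'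
  have hf : HasDerivAt (fun s : ℝ => s * Real.sqrt (1 - (2*M/s + Λ*s^2/3)))
      (1 * Real.sqrt (1 - (2*M/r + Λ*r^2/3))
        + r * ((-(-(2*M)/r^2 + Λ*(2*r)/3)) / (2 * Real.sqrt (1 - (2*M/r + Λ*r^2/3))))) r :=
    (hasDerivAt_id r).mul hsq
  have hu : HasDerivAt (fun s : ℝ => 1 - 3*M/s) (3*M/r^2) r := by
    have h1 : HasDerivAt (fun s : ℝ => 3*M/s) (-(3*M)/r^2) r := by
      have := (hasDerivAt_const r (3*M)).div (hasDerivAt_id r) hrne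
      refine HasDerivAt.congr_deriv this ?_
      try simp only [id_eq]
      ring
    have := (hasDerivAt_const r (1:ℝ)).sub h1
    refine HasDerivAt.congr_deriv this ?_
    ring
  have hv : HasDerivAt (fun s : ℝ => Real.sqrt (1 + 6*M/s))
      ((-(6*M)/r^2) / (2 * Real.sqrt (1 + 6*M/r))) r := by
    have h1 : HasDerivAt (fun s : ℝ => 6*M/s) (-(6*M)/r^2) r := by
      have := (hasDerivAt_const r (6*M)).div (hasDerivAt_id r) hrne
      refine HasDerivAt.congr_deriv this ?_
      try simp only [id_eq]
      ring
    have h2 : HasDerivAt (fun s : ℝ => 1 + 6*M/s) (-(6*M)/r^2) r := by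
      exact h1.const_add 1
    exact h2.sqrt hBpos.ne'
  have hξd : HasDerivAt
      (fun s : ℝ => (1 - 3*M/s) * Real.sqrt (1 + 6*M/s) / Real.sqrt (1 - 9*M^2*Λ))
      ((3*M/r^2 * Real.sqrt (1 + 6*M/r)
        + (1 - 3*M/r) * ((-(6*M)/r^2) / (2 * Real.sqrt (1 + 6*M/r))))
        / Real.sqrt (1 - 9*M^2*Λ)) r :=
    (hu.mul hv).div_const _
  have hnξd : HasDerivAt
      (fun s : ℝ => -((1 - 3*M/s) * Real.sqrt (1 + 6*M/s) / Real.sqrt (1 - 9*M^2*Λ)))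
      (-((3*M/r^2 * Real.sqrt (1 + 6*M/r)
        + (1 - 3*M/r) * ((-(6*M)/r^2) / (2 * Real.sqrt (1 + 6*M/r))))
        / Real.sqrt (1 - 9*M^2*Λ))) r := hξd.neg
  -- rewrite the goal
  simp only [μ, ξ]
  rw [hf.deriv, hnξd.deriv]
  -- apply the algebraic identity
  have hAne : Real.sqrt (1 - (2*M/r + Λ*r^2/3)) ≠ 0 := (Real.sqrt_pos.mpr hApos).ne'
  have hBne : Real.sqrt (1 + 6*M/r) ≠ 0 := (Real.sqrt_pos.mpr hBpos).ne'
  have hCne : Real.sqrt (1 - 9*M^2*Λ) ≠ 0 := (Real.sqrt_pos.mpr hCpos).ne'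
  have halg := alg_key M Λ r (Real.sqrt (1 - (2*M/r + Λ*r^2/3)))
      (Real.sqrt (1 + 6*M/r)) (Real.sqrt (1 - 9*M^2*Λ)) hrne hAne hBne hCne
      (Real.sq_sqrt hApos.le) (Real.sq_sqrt hBpos.le) (Real.sq_sqrt hCpos.le)
  linear_combination halg
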